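/- Let H be a finite-dimensional complex Hilbert space with unit vectors φ₀ and Θ such that ⟨Θ, φ₀⟩ ≠ 0 and Θ is not a scalar multiple of φ₀. Let Ψ = λ(φ₀ ⊗ Θ + Θ ⊗ φ₀) be normalized (λ > 0 chosen so that ‖Ψ‖ = 1), P = |φ₀⟩⟨φ₀|. Then there is no rank-one projection Q with QP = 0 such that ⟨Ψ, E_P E_Q Ψ⟩ = 1, where E_R = R ⊗ 1 + 1 ⊗ R − R ⊗ R. -/

import Mathlib

open Matrix Kronecker

/-- Rank-one operator `|φ⟩⟨φ|` on `ℂ^n`. -/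
noncomputable def proj {n : ℕ} (φ : Fin n → ℂ) : Matrix (Fin n) (Fin n) ℂ :=
  vecMulVec φ (star φ)

/-- Elementary tensor of two vectors. -/
def tp {n : ℕ} (x y : Fin n → ℂ) : Fin n × Fin n → ℂ := fun p => x p.1 * y p.2

/-- The symmetric property projection `E_R = R ⊗ 1 + 1 ⊗ R − R ⊗ R`. -/
noncomputable def EE {n : ℕ} (R : Matrix (Fin n) (Fin n) ℂ) :
    Matrix (Fin n × Fin n) (Fin n × Fin n) ℂ :=
  R ⊗ₖ (1 : Matrix (Fin n) (Fin n) ℂ) + (1 : Matrix (Fin n) (Fin n) ℂ) ⊗ₖ R - R ⊗ₖ R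

lemma tp_smul_right {n : ℕ} (x y : Fin n → ℂ) (c : ℂ) : tp x (c • y) = c • tp x y := by
  funext p; simp [tp]; ring

lemma tp_smul_left {n : ℕ} (x y : Fin n → ℂ) (c : ℂ) : tp (c • x) y = c • tp x y := by
  funext p; simp [tp]; ring

lemma tp_zero_left {n : ℕ} (y : Fin n → ℂ) : tp (0 : Fin n → ℂ) y = 0 := by
  funext p; simp [tp]

lemma tp_zero_right {n : ℕ} (x : Fin n → ℂ) : tp x (0 : Fin n → ℂ) = 0 := by
  funext p; simp [tp]

lemma tp_dot {n : ℕ} (x y u v : Fin n → ℂ) :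
    star (tp x y) ⬝ᵥ tp u v = (star x ⬝ᵥ u) * (star y ⬝ᵥ v) := by
  simp only [dotProduct, Fintype.sum_prod_type, Finset.sum_mul_sum, tp, Pi.star_apply]
  refine Finset.sum_congr rfl fun i _ => Finset.sum_congr rfl fun j _ => ?_
  simp [star_mul']
  ring

lemma kron_mulVec {n : ℕ} (A B : Matrix (Fin n) (Fin n) ℂ) (x y : Fin n → ℂ) :
    (A ⊗ₖ B) *ᵥ tp x y = tp (A *ᵥ x) (B *ᵥ y) := by
  funext p
  simp only [Matrix.mulVec, dotProduct, tp, Fintype.sum_prod_type,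
    kroneckerMap_apply, Finset.sum_mul_sum]
  refine Finset.sum_congr rfl fun i _ => Finset.sum_congr rfl fun j _ => ?_
  ring

lemma proj_mulVec {n : ℕ} (φ x : Fin n → ℂ) : proj φ *ᵥ x = (star φ ⬝ᵥ x) • φ := by
  funext i
  simp only [proj, Matrix.mulVec, dotProduct, vecMulVec_apply, Pi.smul_apply, Pi.star_apply,
    smul_eq_mul, Finset.sum_mul]
  exact Finset.sum_congr rfl fun j _ => by ring

lemma EE_tp {n : ℕ} (R : Matrix (Fin n) (Fin n) ℂ) (x y : Fin n → ℂ) :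
    EE R *ᵥ tp x y = tp (R *ᵥ x) y + tp x (R *ᵥ y) - tp (R *ᵥ x) (R *ᵥ y) := by
  simp [EE, Matrix.add_mulVec, Matrix.sub_mulVec, kron_mulVec, Matrix.one_mulVec]

theorem stmt19 {n : ℕ} (φ₀ Θ : Fin n → ℂ)
    (hφ₀ : star φ₀ ⬝ᵥ φ₀ = 1) (hΘ : star Θ ⬝ᵥ Θ = 1)
    (hover : star Θ ⬝ᵥ φ₀ ≠ 0)
    (hnprop : ∀ z : ℂ, Θ ≠ z • φ₀)
    (lam : ℝ) (hlam : 0 < lam)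
    (Ψ : Fin n × Fin n → ℂ) (hΨdef : Ψ = lam • (tp φ₀ Θ + tp Θ φ₀))
    (hΨnorm : star Ψ ⬝ᵥ Ψ = 1) :
    ¬ ∃ θ : Fin n → ℂ, star θ ⬝ᵥ θ = 1 ∧ star φ₀ ⬝ᵥ θ = 0 ∧
        star Ψ ⬝ᵥ ((EE (proj φ₀) * EE (proj θ)) *ᵥ Ψ) = 1 := by
  rintro ⟨θ, hθ, hortho, hval⟩
  have hΨdef' : Ψ = ((lam : ℂ)) • (tp φ₀ Θ + tp Θ φ₀) := by
    rw [hΨdef]; funext p; simp [Complex.real_smul, mul_add]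
  set a : ℂ := star Θ ⬝ᵥ φ₀ with ha
  set t : ℂ := star θ ⬝ᵥ Θ with ht
  have hortho' : star θ ⬝ᵥ φ₀ = 0 := by rw [star_dotProduct, hortho, star_zero]
  have hb : star φ₀ ⬝ᵥ Θ = star a := by rw [star_dotProduct]
  have hs : star Θ ⬝ᵥ θ = star t := by rw [star_dotProduct]
  have hQφ : proj θ *ᵥ φ₀ = 0 := by rw [proj_mulVec, hortho']; simp
  have hQΘ : proj θ *ᵥ Θ = t • θ := by rw [proj_mulVec]
  have hPφ : proj φ₀ *ᵥ φ₀ = φ₀ := by rw [proj_mulVec, hφ₀]; simp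
  have hPθ : proj φ₀ *ᵥ θ = 0 := by rw [proj_mulVec, hortho]; simp
  have key : (EE (proj φ₀) * EE (proj θ)) *ᵥ Ψ
      = ((lam : ℂ) * t) • (tp φ₀ θ + tp θ φ₀) := by
    rw [hΨdef', ← Matrix.mulVec_mulVec]
    rw [Matrix.mulVec_smul, Matrix.mulVec_add, EE_tp, EE_tp,
      hQφ, hQΘ, tp_zero_left, tp_zero_right, tp_smul_right, tp_smul_left]
    simp only [tp_zero_left, tp_zero_right, tp_smul_left, tp_smul_right, smul_zero, sub_zero,
      zero_sub, zero_add, add_zero, smul_add, Matrix.mulVec_add, Matrix.mulVec_smul,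
      EE_tp, hPφ, hPθ]
    module
  have hval' : (lam : ℂ)^2 * (2 * (t * star t)) = 1 := by
    rw [key, hΨdef'] at hval
    simp only [star_smul, star_add, smul_dotProduct, dotProduct_smul, add_dotProduct,
      dotProduct_add, tp_dot, smul_eq_mul, Complex.star_def, Complex.conj_ofReal] at hval
    rw [hs, hortho, hφ₀] at hval
    linear_combination hval
  have hnorm' : (lam : ℂ)^2 * (2 * (1 + a * star a)) = 1 := by
    rw [hΨdef'] at hΨnorm
    simp only [star_smul, star_add, smul_dotProduct, dotProduct_smul, add_dotProduct,
      dotProduct_add, tp_dot, smul_eq_mul, Complex.star_def, Complex.conj_ofReal] at hΨnorm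
    rw [hφ₀, hΘ, hb] at hΨnorm
    linear_combination hΨnorm
  have hlamne : (lam : ℂ) ≠ 0 := by
    exact_mod_cast Complex.ofReal_ne_zero.mpr (ne_of_gt hlam)
  have hcancel : t * star t = 1 + a * star a := by
    have h2 : (lam : ℂ)^2 * (2 * (t * star t)) = (lam : ℂ)^2 * (2 * (1 + a * star a)) := by
      rw [hval', hnorm']
    have := mul_left_cancel₀ (mul_ne_zero (pow_ne_zero 2 hlamne) two_ne_zero)
      (by linear_combination h2 :
        ((lam : ℂ)^2 * 2) * (t * star t) = ((lam : ℂ)^2 * 2) * (1 + a * star a))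
    exact this
  -- pass to real parts
  have hreal : Complex.normSq t = 1 + Complex.normSq a := by
    have : ((Complex.normSq t : ℝ) : ℂ) = ((1 + Complex.normSq a : ℝ) : ℂ) := by
      push_cast
      rw [← Complex.mul_conj, ← Complex.mul_conj]
      simpa [Complex.star_def, mul_comm] using hcancel
    exact_mod_cast this
  -- Cauchy–Schwarz: |t| ≤ 1
  set θE : EuclideanSpace ℂ (Fin n) := WithLp.toLp 2 θ
  set ΘE : EuclideanSpace ℂ (Fin n) := WithLp.toLp 2 Θ
  have hinner : inner ℂ θE ΘE = t := by
    simp [PiLp.inner_apply, ht, dotProduct, θE, ΘE, mul_comm]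
  have hinθ : inner ℂ θE θE = 1 := by
    rw [PiLp.inner_apply]; simpa [θE, dotProduct, mul_comm, Complex.mul_conj'] using hθ
  have hinΘ : inner ℂ ΘE ΘE = 1 := by
    rw [PiLp.inner_apply]; simpa [ΘE, dotProduct, mul_comm, Complex.mul_conj'] using hΘ
  have hnθ : ‖θE‖ = 1 := by
    have h := inner_self_eq_norm_sq (𝕜 := ℂ) θE
    rw [hinθ] at h
    simp at h
    nlinarith [norm_nonneg θE]
  have hnΘ : ‖ΘE‖ = 1 := by
    have h := inner_self_eq_norm_sq (𝕜 := ℂ) ΘE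
    rw [hinΘ] at h
    simp at h
    nlinarith [norm_nonneg ΘE]
  have hcs : ‖t‖ ≤ 1 := by
    have := norm_inner_le_norm (𝕜 := ℂ) θE ΘE
    rwa [hinner, hnθ, hnΘ, mul_one] at this
  have h1 : Complex.normSq t ≤ 1 := by
    rw [← Complex.sq_norm]
    calc ‖t‖ ^ 2 = ‖t‖^2 := rfl
    _ ≤ 1 := by nlinarith [norm_nonneg t]
  have h2 : 0 < Complex.normSq a := Complex.normSq_pos.mpr hover
  linarith
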